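/- Let $\Omega$ be an $n\times n$ symmetric matrix over a commutative ring with zero diagonal, and let $C = \{v^T \Omega : v \in \mathbb{R}^n_{\ge 0}\}$ be the cone generated by the rows of $\Omega$ (for $\Omega$ with real nonnegative entries). Then $C M \subseteq C$ for every matrix $M$ in the monoid generated by $Q_i = I + D_i\Omega$, $1 \le i \le n$. -/

import Mathlib

theorem stmt10 {n : ℕ} (Ω : Matrix (Fin n) (Fin n) ℝ) (hsymm : Ω.IsSymm)
    (hnn : ∀ a b, 0 ≤ Ω a b) (hdiag : ∀ i, Ω i i = 0) :
    ∀ M ∈ Submonoid.closure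
        (Set.range fun i : Fin n => 1 + Matrix.single i i 1 * Ω),
      ∀ w ∈ {w : Fin n → ℝ | ∃ v : Fin n → ℝ, (∀ k, 0 ≤ v k) ∧ w = Matrix.vecMul v Ω},
        Matrix.vecMul w M ∈
          {w : Fin n → ℝ | ∃ v : Fin n → ℝ, (∀ k, 0 ≤ v k) ∧ w = Matrix.vecMul v Ω} := by
  intro M hM
  induction hM using Submonoid.closure_induction with
  | mem x hx =>
    obtain ⟨i, rfl⟩ := hx
    rintro w ⟨v, hv, rfl⟩
    have hwi : 0 ≤ Matrix.vecMul v Ω i := by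
      simp only [Matrix.vecMul, dotProduct]
      exact Finset.sum_nonneg fun a _ => mul_nonneg (hv a) (hnn a i)
    refine ⟨v + Pi.single i (Matrix.vecMul v Ω i), ?_, ?_⟩
    · intro k
      rcases eq_or_ne k i with rfl | hk
      · simpa using add_nonneg (hv k) hwi
      · simpa [Pi.single_apply, hk] using hv k
    · have h1 : Matrix.vecMul (Matrix.vecMul v Ω) (Matrix.single i i (1:ℝ))
          = Pi.single i (Matrix.vecMul v Ω i) := by
        ext j
        by_cases h : i = j <;>
          simp [Matrix.vecMul, dotProduct, Matrix.single, Pi.single_apply, h,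
            eq_comm]
      rw [Matrix.add_vecMul, Matrix.vecMul_add, Matrix.vecMul_one, ← Matrix.vecMul_vecMul, h1]
  | one =>
    rintro w ⟨v, hv, rfl⟩
    exact ⟨v, hv, by simp⟩
  | mul a b ha hb iha ihb =>
    intro w hw
    rw [← Matrix.vecMul_vecMul]
    exact ihb _ (iha _ hw)
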